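/- arXiv:2212.11038 — 3 statements merged into one kernel-verified Lean document; each statement's English description precedes it below -/
import Mathlib

section
/- Let $K/\mathbb{Q}$ be a Galois extension of degree $d$ with ring of integers $\mathfrak{o}_K$. The linear map sending a symmetric coefficient tuple $(c_{i,j,\tau,\tau'})$ (with $c_{i,j,\tau,\tau'}=c_{j,i,\tau',\tau}$, coefficients in $\mathbb{Q}$ components with respect to a fixed $\mathbb{Z}$-basis of $\mathfrak{o}_K$) of a generalised quadratic form in $n$ variables to the coefficient tuple $(\beta_{p,l,i,m,j})$ of its descended system of $d$ rational quadratic forms in $dn$ variables is injective; consequently there is a bijection between generalised quadratic forms in $n$ variables over $K$ and systems of $d$ rational quadratic forms in $dn$ variables. -/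
open scoped BigOperators

/-- If a `K`-linear combination of the distinct automorphisms of `K` vanishes on a
`ℚ`-basis of `K`, then all coefficients vanish (Dedekind / Artin linear
independence of characters). -/
lemma aux_char_indep (K : Type*) [Field K] [NumberField K]
    {d : ℕ} (ω : Module.Basis (Fin d) ℚ K)
    (g : (K ≃ₐ[ℚ] K) → K)
    (h : ∀ l : Fin d, ∑ σ : K ≃ₐ[ℚ] K, g σ * σ (ω l) = 0) :
    ∀ σ, g σ = 0 := by
  have li : LinearIndependent K
      (fun σ : K ≃ₐ[ℚ] K => (σ : K →ₐ[ℚ] K).toLinearMap) :=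
    (linearIndependent_algHom_toLinearMap ℚ K K).comp _ AlgEquiv.coe_algHom_injective
  have h0 : (∑ σ : K ≃ₐ[ℚ] K, g σ • (σ : K →ₐ[ℚ] K).toLinearMap) = 0 := by
    apply ω.ext
    intro l
    simpa using h l
  exact Fintype.linearIndependent_iff.mp li g h0

/-- If `Tr(ρ p * x) = 0` for all elements of the dual basis `ρ`, then `x = 0`. -/
lemma aux_trace_sep (K : Type*) [Field K] [NumberField K]
    {d : ℕ} (ω : Module.Basis (Fin d) ℚ K) (ρ : Fin d → K)
    (hdual : ∀ p k : Fin d,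
      Algebra.trace ℚ K (ρ p * ω k) = if p = k then 1 else 0)
    (x : K) (h : ∀ p, Algebra.trace ℚ K (ρ p * x) = 0) : x = 0 := by
  have hrepr : ∀ p, ω.repr x p = 0 := by
    intro p
    have e : ρ p * x = ∑ k : Fin d, ω.repr x k • (ρ p * ω k) := by
      conv_lhs => rw [← ω.sum_repr x]
      rw [Finset.mul_sum]
      exact Finset.sum_congr rfl fun k _ => (mul_smul_comm _ _ _)
    have := h p
    rw [e, map_sum] at this
    simp only [map_smul, hdual, smul_eq_mul, mul_ite, mul_one, mul_zero,
      Finset.sum_ite_eq, Finset.mem_univ, if_true] at this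
    exact this
  have : ω.repr x = 0 := by ext p; simpa using hrepr p
  simpa using ω.repr.injective (by simpa using this)

/-- Let `K/ℚ` be a Galois extension of degree `d`, with a basis
`ω : Fin d → K` of `K/ℚ` (a `ℤ`-basis of the ring of integers) and dual basis
`ρ : Fin d → K` with respect to the trace form.  The linear map sending a
symmetric coefficient tuple `(c i j τ τ')` of a generalised quadratic form in
`n` variables to the coefficient tuple
`β p l i m' j = Tr(ρ p * ∑ τ τ', c i j τ τ' * τ (ω l) * τ' (ω m'))`
of its descended system of `d` rational quadratic forms in `d * n` variables is
injective; consequently generalised quadratic forms are in bijection with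
systems of `d` rational quadratic forms in `d * n` variables. -/
theorem descended_system_injective
    (K : Type*) [Field K] [NumberField K] [IsGalois ℚ K]
    (d n : ℕ) (hd : Module.finrank ℚ K = d)
    (ω : Module.Basis (Fin d) ℚ K) (ρ : Fin d → K)
    (hdual : ∀ p k : Fin d,
      Algebra.trace ℚ K (ρ p * ω k) = if p = k then 1 else 0)
    (c c' : Fin n → Fin n → (K ≃ₐ[ℚ] K) → (K ≃ₐ[ℚ] K) → K)
    (hsym : ∀ i j τ τ', c i j τ τ' = c j i τ' τ)
    (hsym' : ∀ i j τ τ', c' i j τ τ' = c' j i τ' τ)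
    (hβ : ∀ (p l m' : Fin d) (i j : Fin n),
      Algebra.trace ℚ K (ρ p *
        ∑ τ : K ≃ₐ[ℚ] K, ∑ τ' : K ≃ₐ[ℚ] K, c i j τ τ' * τ (ω l) * τ' (ω m')) =
      Algebra.trace ℚ K (ρ p *
        ∑ τ : K ≃ₐ[ℚ] K, ∑ τ' : K ≃ₐ[ℚ] K, c' i j τ τ' * τ (ω l) * τ' (ω m'))) :
    c = c' := by
  funext i j σ σ'
  set D : (K ≃ₐ[ℚ] K) → (K ≃ₐ[ℚ] K) → K :=
    fun τ τ' => c i j τ τ' - c' i j τ τ' with hD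
  -- Step 1: the bilinear expressions in the basis of `D` all vanish.
  have step1 : ∀ l m' : Fin d,
      ∑ τ : K ≃ₐ[ℚ] K, ∑ τ' : K ≃ₐ[ℚ] K, D τ τ' * τ (ω l) * τ' (ω m') = 0 := by
    intro l m'
    apply aux_trace_sep K ω ρ hdual
    intro p
    have := hβ p l m' i j
    have hsub : ρ p * ∑ τ : K ≃ₐ[ℚ] K, ∑ τ' : K ≃ₐ[ℚ] K, D τ τ' * τ (ω l) * τ' (ω m')
        = ρ p * (∑ τ : K ≃ₐ[ℚ] K, ∑ τ' : K ≃ₐ[ℚ] K, c i j τ τ' * τ (ω l) * τ' (ω m'))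
        - ρ p * (∑ τ : K ≃ₐ[ℚ] K, ∑ τ' : K ≃ₐ[ℚ] K, c' i j τ τ' * τ (ω l) * τ' (ω m')) := by
      rw [← mul_sub, ← Finset.sum_sub_distrib]
      congr 1
      apply Finset.sum_congr rfl
      intro τ _
      rw [← Finset.sum_sub_distrib]
      apply Finset.sum_congr rfl
      intro τ' _
      simp [hD]
      ring
    rw [hsub, map_sub, this, sub_self]
  -- Step 2: peel off the first automorphism.
  have step2 : ∀ (m' : Fin d) (τ : K ≃ₐ[ℚ] K),
      ∑ τ' : K ≃ₐ[ℚ] K, D τ τ' * τ' (ω m') = 0 := by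
    intro m' τ
    refine aux_char_indep K ω (fun τ => ∑ τ' : K ≃ₐ[ℚ] K, D τ τ' * τ' (ω m')) ?_ τ
    intro l
    have := step1 l m'
    rw [← this]
    apply Finset.sum_congr rfl
    intro τ _
    rw [Finset.sum_mul]
    apply Finset.sum_congr rfl
    intro τ' _
    ring
  -- Step 3: peel off the second automorphism.
  have step3 : D σ σ' = 0 := by
    refine aux_char_indep K ω (fun τ' => D σ τ') ?_ σ'
    intro m'
    exact step2 m' σ
  have := sub_eq_zero.mp step3
  exact this
end

section
/- Let $K$ be a number field with ring of integers $\mathfrak{o}$, different ideal $\mathfrak{d}$, and $\psi(\cdot)=\exp(2\pi i\,\mathrm{Tr}_{K/\mathbb{Q}}(\cdot))$. Let $\gamma\in K$ and let $\mathfrak{b}\subsetneq\mathfrak{o}$ be an integral ideal. Then $x\mapsto\psi(\gamma x)$ is a non-trivial primitive additive character modulo $\mathfrak{b}$ if and only if the denominator ideal $\mathfrak{a}_\gamma=\{\alpha\in\mathfrak{o}:\alpha\gamma\in\mathfrak{o}\}$ satisfies $\mathfrak{a}_\gamma=\mathfrak{b}\mathfrak{e}$ for some integral ideal $\mathfrak{e}\mid\mathfrak{d}$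 with $\mathfrak{d}\mathfrak{e}^{-1}+\mathfrak{b}=\mathfrak{o}$. -/
open NumberField Complex

/-- The additive character `x ↦ exp(2πi Tr_{K/ℚ}(γ x))` on the ring of integers. -/
noncomputable def psiChar (K : Type*) [Field K] [NumberField K] (γ : K)
    (x : 𝓞 K) : ℂ :=
  Complex.exp (2 * Real.pi * Complex.I * ((Algebra.trace ℚ K (γ * (x : K)) : ℚ) : ℂ))

/-- `σ : 𝓞 K → ℂ` is invariant under translation by the ideal `𝔟`. -/
def IsCharMod {K : Type*} [Field K] [NumberField K] (𝔟 : Ideal (𝓞 K))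
    (σ : 𝓞 K → ℂ) : Prop :=
  ∀ x z : 𝓞 K, z ∈ 𝔟 → σ (x + z) = σ x

/-- `σ` is a primitive character modulo `𝔟`: it is a character modulo `𝔟` but
not modulo any proper divisor of `𝔟`. -/
def IsPrimitiveCharMod {K : Type*} [Field K] [NumberField K] (𝔟 : Ideal (𝓞 K))
    (σ : 𝓞 K → ℂ) : Prop :=
  IsCharMod 𝔟 σ ∧ ∀ 𝔟₁ : Ideal (𝓞 K), 𝔟₁ ∣ 𝔟 → 𝔟₁ ≠ 𝔟 → ¬ IsCharMod 𝔟₁ σ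

section Aux

open FractionalIdeal
open scoped nonZeroDivisors

variable {K : Type*} [Field K] [NumberField K]

lemma psiChar_add (γ : K) (x z : 𝓞 K) :
    psiChar K γ (x + z) = psiChar K γ x * psiChar K γ z := by
  have ht : Algebra.trace ℚ K (γ * ((x + z : 𝓞 K) : K))
      = Algebra.trace ℚ K (γ * (x : K)) + Algebra.trace ℚ K (γ * (z : K)) := by
    push_cast
    rw [mul_add, _root_.map_add]
  rw [psiChar, psiChar, psiChar, ← Complex.exp_add, ht]
  push_cast
  ring_nf

lemma psiChar_zero (γ : K) : psiChar K γ 0 = 1 := by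
  simp [psiChar]

lemma psiChar_eq_one_iff (γ : K) (z : 𝓞 K) :
    psiChar K γ z = 1 ↔ ∃ n : ℤ, Algebra.trace ℚ K (γ * z) = (n : ℚ) := by
  rw [psiChar, Complex.exp_eq_one_iff]
  constructor
  · rintro ⟨n, hn⟩
    refine ⟨n, ?_⟩
    have h2 : (2 * Real.pi * Complex.I : ℂ) ≠ 0 := by
      simp [Real.pi_ne_zero, Complex.I_ne_zero]
    have h3 : (2 * Real.pi * Complex.I : ℂ) * ((Algebra.trace ℚ K (γ * z) : ℚ) : ℂ)
        = (2 * Real.pi * Complex.I) * (n : ℂ) := by rw [hn]; ring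
    have := mul_left_cancel₀ h2 h3
    exact_mod_cast this
  · rintro ⟨n, hn⟩
    exact ⟨n, by rw [hn]; push_cast; ring⟩

lemma isCharMod_iff (γ : K) (𝔟₁ : Ideal (𝓞 K)) :
    IsCharMod 𝔟₁ (psiChar K γ) ↔
      ∀ z ∈ 𝔟₁, ∃ n : ℤ, Algebra.trace ℚ K (γ * z) = (n : ℚ) := by
  constructor
  · intro h z hz
    have h0 := h 0 z hz
    rw [zero_add, psiChar_zero] at h0
    exact (psiChar_eq_one_iff γ z).1 h0
  · intro h x z hz
    rw [psiChar_add, (psiChar_eq_one_iff γ z).2 (h z hz), mul_one]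

lemma le_inv_iff' {X Y : FractionalIdeal (𝓞 K)⁰ K} (hY : Y ≠ 0) :
    X ≤ Y⁻¹ ↔ X * Y ≤ 1 := by
  rw [← one_div, le_div_iff_mul_le hY]

lemma mul_inv_le_one_iff' {X Y : FractionalIdeal (𝓞 K)⁰ K} (hY : Y ≠ 0) :
    X * Y⁻¹ ≤ 1 ↔ X ≤ Y := by
  rw [← le_inv_iff' (inv_ne_zero hY), inv_inv]

lemma different_ne_bot : differentIdeal ℤ (𝓞 K) ≠ ⊥ := by
  have h := coeIdeal_differentIdeal ℤ ℚ K (𝓞 K)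
  have : (differentIdeal ℤ (𝓞 K) : FractionalIdeal (𝓞 K)⁰ K) ≠ 0 := by
    rw [h]
    exact inv_ne_zero (FractionalIdeal.dual_ne_zero ℤ ℚ one_ne_zero)
  simpa [FractionalIdeal.coeIdeal_eq_zero] using this

lemma exists_coprime_rep (J : FractionalIdeal (𝓞 K)⁰ K) (hJ : J ≠ 0) :
    ∃ C A : Ideal (𝓞 K), C ≠ ⊥ ∧ A ≠ ⊥ ∧ IsCoprime C A ∧
      J = (C : FractionalIdeal (𝓞 K)⁰ K) * (A : FractionalIdeal (𝓞 K)⁰ K)⁻¹ := by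
  obtain ⟨a, I₀, ha, hI⟩ := exists_eq_spanSingleton_mul J
  have hsa : (Ideal.span {a} : Ideal (𝓞 K)) ≠ ⊥ := by
    simpa [Ideal.span_singleton_eq_bot] using ha
  have hJ' : J = (I₀ : FractionalIdeal (𝓞 K)⁰ K) *
      ((Ideal.span {a} : Ideal (𝓞 K)) : FractionalIdeal (𝓞 K)⁰ K)⁻¹ := by
    rw [hI, coeIdeal_span_singleton, spanSingleton_inv, mul_comm]
  obtain ⟨C, hC⟩ := gcd_dvd_left I₀ (Ideal.span {a})
  obtain ⟨A, hA⟩ := gcd_dvd_right I₀ (Ideal.span {a})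
  set G := gcd I₀ (Ideal.span {a}) with hG
  have hG0 : G ≠ 0 := by
    intro h
    rw [h, zero_mul] at hA
    exact hsa hA
  have hA0 : A ≠ ⊥ := by
    intro h
    rw [h, Ideal.mul_bot] at hA
    exact hsa hA
  have hI₀0 : I₀ ≠ ⊥ := by
    intro h
    rw [hJ', h] at hJ
    simp at hJ
  have hC0 : C ≠ ⊥ := by
    intro h
    rw [h, Ideal.mul_bot] at hC
    exact hI₀0 hC
  have hcop : IsCoprime C A := by
    rw [Ideal.isCoprime_iff_gcd]
    have h1 : G * gcd C A = G := by
      conv_rhs => rw [hG, hC, hA]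
      rw [gcd_mul_left, normalize_eq]
    exact mul_left_cancel₀ hG0 (h1.trans (mul_one G).symm)
  refine ⟨C, A, hC0, hA0, hcop, ?_⟩
  have hGf : (G : FractionalIdeal (𝓞 K)⁰ K) ≠ 0 := by
    simpa [coeIdeal_eq_zero] using hG0
  rw [hJ', hC, hA]
  push_cast
  rw [← div_eq_mul_inv, ← div_eq_mul_inv, mul_div_mul_left _ _ hGf]

lemma trace_int_iff (𝔟₁ : Ideal (𝓞 K)) (h : 𝔟₁ ≠ ⊥) (γ : K) :
    (∀ z ∈ 𝔟₁, ∃ n : ℤ, Algebra.trace ℚ K (γ * (z : K)) = (n : ℚ)) ↔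
      spanSingleton (𝓞 K)⁰ γ * (𝔟₁ : FractionalIdeal (𝓞 K)⁰ K) *
        (differentIdeal ℤ (𝓞 K) : FractionalIdeal (𝓞 K)⁰ K) ≤ 1 := by
  have h𝔟f : (𝔟₁ : FractionalIdeal (𝓞 K)⁰ K) ≠ 0 := by
    simpa [coeIdeal_eq_zero] using h
  have h𝔡 : (differentIdeal ℤ (𝓞 K) : FractionalIdeal (𝓞 K)⁰ K) ≠ 0 := by
    simpa [coeIdeal_eq_zero] using (different_ne_bot (K := K))
  have step1 : (∀ z ∈ 𝔟₁, ∃ n : ℤ, Algebra.trace ℚ K (γ * (z : K)) = (n : ℚ)) ↔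
      γ ∈ FractionalIdeal.dual ℤ ℚ (𝔟₁ : FractionalIdeal (𝓞 K)⁰ K) := by
    rw [FractionalIdeal.mem_dual h𝔟f]
    constructor
    · rintro hz a ha
      obtain ⟨z, hzmem, rfl⟩ := (mem_coeIdeal _).1 ha
      obtain ⟨n, hn⟩ := hz z hzmem
      exact ⟨n, by simpa [Algebra.traceForm_apply] using hn.symm⟩
    · intro hz z hzmem
      obtain ⟨n, hn⟩ := hz ((algebraMap (𝓞 K) K) z) ((mem_coeIdeal _).2 ⟨z, hzmem, rfl⟩)
      exact ⟨n, by simpa [Algebra.traceForm_apply] using hn.symm⟩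
  rw [step1, ← spanSingleton_le_iff_mem, FractionalIdeal.dual_eq_mul_inv ℤ ℚ]
  have hdual : FractionalIdeal.dual ℤ ℚ (1 : FractionalIdeal (𝓞 K)⁰ K) =
      ((differentIdeal ℤ (𝓞 K) : FractionalIdeal (𝓞 K)⁰ K))⁻¹ := by
    rw [coeIdeal_differentIdeal ℤ ℚ K (𝓞 K), inv_inv]
  rw [hdual, ← mul_inv, le_inv_iff' (mul_ne_zero h𝔡 h𝔟f),
    mul_comm (differentIdeal ℤ (𝓞 K) : FractionalIdeal (𝓞 K)⁰ K), ← mul_assoc]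

lemma isCharMod_iff_dvd (γ : K) {N M : Ideal (𝓞 K)} (hM : M ≠ ⊥) (hNM : IsCoprime N M)
    (hrep : spanSingleton (𝓞 K)⁰ γ * (differentIdeal ℤ (𝓞 K) : FractionalIdeal (𝓞 K)⁰ K)
      = (N : FractionalIdeal (𝓞 K)⁰ K) * (M : FractionalIdeal (𝓞 K)⁰ K)⁻¹)
    (𝔟₁ : Ideal (𝓞 K)) (h𝔟₁ : 𝔟₁ ≠ ⊥) :
    IsCharMod 𝔟₁ (psiChar K γ) ↔ M ∣ 𝔟₁ := by
  have hMf : (M : FractionalIdeal (𝓞 K)⁰ K) ≠ 0 := by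
    simpa [coeIdeal_eq_zero] using hM
  rw [isCharMod_iff, trace_int_iff 𝔟₁ h𝔟₁ γ]
  have hre : spanSingleton (𝓞 K)⁰ γ * (𝔟₁ : FractionalIdeal (𝓞 K)⁰ K) *
      (differentIdeal ℤ (𝓞 K) : FractionalIdeal (𝓞 K)⁰ K)
      = ((N * 𝔟₁ : Ideal (𝓞 K)) : FractionalIdeal (𝓞 K)⁰ K) *
        (M : FractionalIdeal (𝓞 K)⁰ K)⁻¹ := by
    rw [coeIdeal_mul, mul_right_comm, hrep]
    ring
  rw [hre, mul_inv_le_one_iff' hMf, coeIdeal_le_coeIdeal, ← Ideal.dvd_iff_le]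
  constructor
  · intro hdvd
    exact hNM.symm.dvd_of_dvd_mul_left hdvd
  · intro hdvd
    exact hdvd.mul_left N

lemma denom_mem_iff (γ : K) {C A : Ideal (𝓞 K)} (hA : A ≠ ⊥) (hCA : IsCoprime C A)
    (hrep : spanSingleton (𝓞 K)⁰ γ
      = (C : FractionalIdeal (𝓞 K)⁰ K) * (A : FractionalIdeal (𝓞 K)⁰ K)⁻¹) (α : 𝓞 K) :
    (∃ β : 𝓞 K, (α : K) * γ = (β : K)) ↔ α ∈ A := by
  have hAf : (A : FractionalIdeal (𝓞 K)⁰ K) ≠ 0 := by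
    simpa [coeIdeal_eq_zero] using hA
  constructor
  · rintro ⟨β, hβ⟩
    have h1 : spanSingleton (𝓞 K)⁰ (α : K) *
        ((C : FractionalIdeal (𝓞 K)⁰ K) * (A : FractionalIdeal (𝓞 K)⁰ K)⁻¹) ≤ 1 := by
      rw [← hrep, spanSingleton_mul_spanSingleton, hβ, spanSingleton_le_iff_mem]
      exact (FractionalIdeal.mem_one_iff _).2 ⟨β, rfl⟩
    rw [← mul_assoc, mul_inv_le_one_iff' hAf] at h1
    have h2 : ((Ideal.span {α} * C : Ideal (𝓞 K)) : FractionalIdeal (𝓞 K)⁰ K) ≤ A := by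
      rwa [coeIdeal_mul, coeIdeal_span_singleton]
    rw [coeIdeal_le_coeIdeal, ← Ideal.dvd_iff_le] at h2
    have h3 : A ∣ Ideal.span {α} := hCA.symm.dvd_of_dvd_mul_right h2
    exact (Ideal.dvd_span_singleton).1 h3
  · intro hα
    have h2 : spanSingleton (𝓞 K)⁰ (α : K) ≤ (A : FractionalIdeal (𝓞 K)⁰ K) :=
      spanSingleton_le_iff_mem.2 ((mem_coeIdeal _).2 ⟨α, hα, rfl⟩)
    have h1 : spanSingleton (𝓞 K)⁰ ((α : K) * γ) ≤ 1 := by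
      rw [← spanSingleton_mul_spanSingleton, hrep, ← mul_assoc, mul_right_comm]
      calc spanSingleton (𝓞 K)⁰ (α : K) * (A : FractionalIdeal (𝓞 K)⁰ K)⁻¹ *
          (C : FractionalIdeal (𝓞 K)⁰ K)
          ≤ (A : FractionalIdeal (𝓞 K)⁰ K) * (A : FractionalIdeal (𝓞 K)⁰ K)⁻¹ *
            (C : FractionalIdeal (𝓞 K)⁰ K) := by
            exact mul_le_mul_left (mul_le_mul_left h2 _) _
        _ = (C : FractionalIdeal (𝓞 K)⁰ K) := by
            rw [mul_inv_cancel₀ hAf, one_mul]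
        _ ≤ 1 := coeIdeal_le_one
    obtain ⟨β, hβ⟩ := (FractionalIdeal.mem_one_iff _).1 (spanSingleton_le_iff_mem.1 h1)
    exact ⟨β, hβ.symm⟩

lemma bridge {C A N M 𝔟 : Ideal (𝓞 K)}
    (h𝔟0 : 𝔟 ≠ ⊥)
    (hCA : IsCoprime C A) (hNM : IsCoprime N M)
    (heq : C * differentIdeal ℤ (𝓞 K) * M = N * A) :
    M = 𝔟 ↔ ∃ 𝔢 𝔣 : Ideal (𝓞 K), 𝔢 * 𝔣 = differentIdeal ℤ (𝓞 K) ∧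
      𝔣 + 𝔟 = ⊤ ∧ A = 𝔟 * 𝔢 := by
  set 𝔡 := differentIdeal ℤ (𝓞 K) with h𝔡def
  have h𝔡 : 𝔡 ≠ ⊥ := different_ne_bot
  constructor
  · rintro rfl
    obtain ⟨𝔣, h𝔣⟩ := gcd_dvd_left 𝔡 A
    obtain ⟨A', hA'⟩ := gcd_dvd_right 𝔡 A
    set 𝔢 := gcd 𝔡 A with h𝔢def
    have h𝔢0 : 𝔢 ≠ 0 := by
      intro h
      rw [h, zero_mul] at h𝔣
      exact h𝔡 h𝔣
    have hcop : IsCoprime 𝔣 A' := by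
      rw [Ideal.isCoprime_iff_gcd]
      have h1 : 𝔢 * gcd 𝔣 A' = 𝔢 := by
        conv_rhs => rw [h𝔢def, h𝔣, hA']
        rw [gcd_mul_left, normalize_eq]
      exact mul_left_cancel₀ h𝔢0 (h1.trans (mul_one 𝔢).symm)
    have heq2 : C * 𝔣 * M = N * A' := by
      apply mul_left_cancel₀ h𝔢0
      calc 𝔢 * (C * 𝔣 * M) = C * (𝔢 * 𝔣) * M := by ring
        _ = C * 𝔡 * M := by rw [← h𝔣]
        _ = N * A := heq
        _ = N * (𝔢 * A') := by rw [← hA']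
        _ = 𝔢 * (N * A') := by ring
    have hA'C : IsCoprime A' C := (hCA.of_isCoprime_of_dvd_right ⟨𝔢, by rw [hA']; ring⟩).symm
    have hA'M : A' ∣ M := by
      have h1 : A' ∣ C * (𝔣 * M) := ⟨N, by rw [← mul_assoc, heq2]; ring⟩
      have h2 : A' ∣ 𝔣 * M := hA'C.dvd_of_dvd_mul_left h1
      exact (hcop.symm).dvd_of_dvd_mul_left h2
    have hMA' : M ∣ A' := by
      have h1 : M ∣ N * A' := ⟨C * 𝔣, by rw [← heq2]; ring⟩
      exact (hNM.symm).dvd_of_dvd_mul_left h1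
    have hA'M' : A' = M :=
      le_antisymm (Ideal.dvd_iff_le.1 hMA') (Ideal.dvd_iff_le.1 hA'M)
    have hNf : C * 𝔣 = N := by
      apply mul_right_cancel₀ h𝔟0
      rw [heq2, hA'M']
    have h𝔣M : IsCoprime 𝔣 M := hNM.of_isCoprime_of_dvd_left ⟨C, by rw [← hNf]; ring⟩
    refine ⟨𝔢, 𝔣, h𝔣.symm, ?_, by rw [hA', hA'M']; ring⟩
    rw [← Ideal.one_eq_top]
    exact h𝔣M.add_eq
  · rintro ⟨𝔢, 𝔣, h𝔢𝔣, h𝔣𝔟, hA⟩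
    have h𝔢0 : 𝔢 ≠ 0 := by
      intro h
      rw [h, zero_mul] at h𝔢𝔣
      exact h𝔡 h𝔢𝔣.symm
    have h𝔣cop : IsCoprime 𝔣 𝔟 := Ideal.isCoprime_iff_add.2 (by rw [Ideal.one_eq_top]; exact h𝔣𝔟)
    have heq2 : C * 𝔣 * M = N * 𝔟 := by
      apply mul_left_cancel₀ h𝔢0
      calc 𝔢 * (C * 𝔣 * M) = C * (𝔢 * 𝔣) * M := by ring
        _ = C * 𝔡 * M := by rw [h𝔢𝔣]
        _ = N * A := heq
        _ = N * (𝔟 * 𝔢) := by rw [← hA]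
        _ = 𝔢 * (N * 𝔟) := by ring
    have h𝔟C : IsCoprime 𝔟 C := (hCA.of_isCoprime_of_dvd_right ⟨𝔢, hA⟩).symm
    have hM𝔟 : M ∣ 𝔟 := by
      have h1 : M ∣ N * 𝔟 := ⟨C * 𝔣, by rw [← heq2]; ring⟩
      exact (hNM.symm).dvd_of_dvd_mul_left h1
    have h𝔟M : 𝔟 ∣ M := by
      have h1 : 𝔟 ∣ C * (𝔣 * M) := ⟨N, by rw [← mul_assoc, heq2]; ring⟩
      have h2 : 𝔟 ∣ 𝔣 * M := h𝔟C.dvd_of_dvd_mul_left h1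
      exact (h𝔣cop.symm).dvd_of_dvd_mul_left h2
    exact le_antisymm (Ideal.dvd_iff_le.1 h𝔟M) (Ideal.dvd_iff_le.1 hM𝔟)

end Aux

open FractionalIdeal
open scoped nonZeroDivisors

/-- Let `K` be a number field with ring of integers `𝓞`,
different ideal `𝔡` and `ψ(x) = exp(2πi Tr_{K/ℚ}(x))`.  For `γ ∈ K` and a
proper integral ideal `𝔟 ⊊ 𝓞`, the map `x ↦ ψ(γ x)` is a non-trivial primitive
additive character modulo `𝔟` if and only if the denominator ideal
`𝔞_γ = {α ∈ 𝓞 : α γ ∈ 𝓞}` satisfies `𝔞_γ = 𝔟 𝔢` for some integral ideal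
`𝔢 ∣ 𝔡` with `𝔡 𝔢⁻¹` coprime to `𝔟`. -/
theorem primitiveChar_iff_denominator_eq
    (K : Type*) [Field K] [NumberField K] (γ : K) (𝔟 : Ideal (𝓞 K))
    (h𝔟 : 𝔟 ≠ ⊤) :
    ((∃ x : 𝓞 K, psiChar K γ x ≠ 1) ∧ IsPrimitiveCharMod 𝔟 (psiChar K γ)) ↔
      ∃ 𝔢 𝔣 : Ideal (𝓞 K), 𝔢 * 𝔣 = differentIdeal ℤ (𝓞 K) ∧
        𝔣 + 𝔟 = ⊤ ∧
        (∀ α : 𝓞 K, (∃ β : 𝓞 K, (α : K) * γ = (β : K)) ↔ α ∈ 𝔟 * 𝔢) := by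
  classical
  by_cases hγ : γ = 0
  · subst hγ
    constructor
    · rintro ⟨⟨x, hx⟩, -⟩
      exact absurd (by simp [psiChar]) hx
    · rintro ⟨𝔢, 𝔣, h1, h2, h3⟩
      have h4 : (1 : 𝓞 K) ∈ 𝔟 * 𝔢 := (h3 1).1 ⟨0, by simp⟩
      have h5 : 𝔟 * 𝔢 = ⊤ := Ideal.eq_top_of_isUnit_mem _ h4 isUnit_one
      exact (h𝔟 (top_le_iff.1 (h5 ▸ Ideal.mul_le_left))).elim
  · -- γ ≠ 0
    have hspan : spanSingleton (𝓞 K)⁰ γ ≠ 0 := by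
      simpa [spanSingleton_eq_zero_iff] using hγ
    have h𝔡 : (differentIdeal ℤ (𝓞 K) : FractionalIdeal (𝓞 K)⁰ K) ≠ 0 := by
      simpa [coeIdeal_eq_zero] using (different_ne_bot (K := K))
    obtain ⟨C, A, hC0, hA0, hCA, hrepCA⟩ := exists_coprime_rep
      (spanSingleton (𝓞 K)⁰ γ) hspan
    obtain ⟨N, M, hN0, hM0, hNM, hrepNM⟩ := exists_coprime_rep
      (spanSingleton (𝓞 K)⁰ γ * (differentIdeal ℤ (𝓞 K) : FractionalIdeal (𝓞 K)⁰ K))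
      (mul_ne_zero hspan h𝔡)
    have hAf : (A : FractionalIdeal (𝓞 K)⁰ K) ≠ 0 := by
      simpa [coeIdeal_eq_zero] using hA0
    have hMf : (M : FractionalIdeal (𝓞 K)⁰ K) ≠ 0 := by
      simpa [coeIdeal_eq_zero] using hM0
    have heq : C * differentIdeal ℤ (𝓞 K) * M = N * A := by
      apply FractionalIdeal.coeIdeal_injective (K := K)
      have h1 : (C : FractionalIdeal (𝓞 K)⁰ K) * (A : FractionalIdeal (𝓞 K)⁰ K)⁻¹ *
          (differentIdeal ℤ (𝓞 K) : FractionalIdeal (𝓞 K)⁰ K)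
          = (N : FractionalIdeal (𝓞 K)⁰ K) * (M : FractionalIdeal (𝓞 K)⁰ K)⁻¹ := by
        rw [← hrepCA, ← hrepNM]
      have h2 : (C : FractionalIdeal (𝓞 K)⁰ K) *
          (differentIdeal ℤ (𝓞 K) : FractionalIdeal (𝓞 K)⁰ K) *
          (M : FractionalIdeal (𝓞 K)⁰ K)
          = (N : FractionalIdeal (𝓞 K)⁰ K) * (A : FractionalIdeal (𝓞 K)⁰ K) := by
        calc (C : FractionalIdeal (𝓞 K)⁰ K) *
            (differentIdeal ℤ (𝓞 K) : FractionalIdeal (𝓞 K)⁰ K) *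
            (M : FractionalIdeal (𝓞 K)⁰ K)
            = (C : FractionalIdeal (𝓞 K)⁰ K) * (A : FractionalIdeal (𝓞 K)⁰ K)⁻¹ *
              (differentIdeal ℤ (𝓞 K) : FractionalIdeal (𝓞 K)⁰ K) *
              ((A : FractionalIdeal (𝓞 K)⁰ K) * (M : FractionalIdeal (𝓞 K)⁰ K)) := by
              rw [mul_comm ((A : FractionalIdeal (𝓞 K)⁰ K))]
              rw [show (C : FractionalIdeal (𝓞 K)⁰ K) * (A : FractionalIdeal (𝓞 K)⁰ K)⁻¹ *
                (differentIdeal ℤ (𝓞 K) : FractionalIdeal (𝓞 K)⁰ K) *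
                ((M : FractionalIdeal (𝓞 K)⁰ K) * (A : FractionalIdeal (𝓞 K)⁰ K))
                = (C : FractionalIdeal (𝓞 K)⁰ K) *
                  (differentIdeal ℤ (𝓞 K) : FractionalIdeal (𝓞 K)⁰ K) *
                  (M : FractionalIdeal (𝓞 K)⁰ K) *
                  ((A : FractionalIdeal (𝓞 K)⁰ K)⁻¹ * (A : FractionalIdeal (𝓞 K)⁰ K)) from by
                  ring]
              rw [inv_mul_cancel₀ hAf, mul_one]
          _ = (N : FractionalIdeal (𝓞 K)⁰ K) * (M : FractionalIdeal (𝓞 K)⁰ K)⁻¹ *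
              ((A : FractionalIdeal (𝓞 K)⁰ K) * (M : FractionalIdeal (𝓞 K)⁰ K)) := by
              rw [h1]
          _ = (N : FractionalIdeal (𝓞 K)⁰ K) * (A : FractionalIdeal (𝓞 K)⁰ K) *
              ((M : FractionalIdeal (𝓞 K)⁰ K)⁻¹ * (M : FractionalIdeal (𝓞 K)⁰ K)) := by
              ring
          _ = (N : FractionalIdeal (𝓞 K)⁰ K) * (A : FractionalIdeal (𝓞 K)⁰ K) := by
              rw [inv_mul_cancel₀ hMf, mul_one]
      push_cast
      exact h2
    have hchar : ∀ 𝔟₁ : Ideal (𝓞 K), 𝔟₁ ≠ ⊥ →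
        (IsCharMod 𝔟₁ (psiChar K γ) ↔ M ∣ 𝔟₁) :=
      fun 𝔟₁ h𝔟₁ => isCharMod_iff_dvd γ hM0 hNM hrepNM 𝔟₁ h𝔟₁
    have hdenom : ∀ α : 𝓞 K, (∃ β : 𝓞 K, (α : K) * γ = (β : K)) ↔ α ∈ A :=
      denom_mem_iff γ hA0 hCA hrepCA
    by_cases h𝔟0 : 𝔟 = ⊥
    · subst h𝔟0
      constructor
      · rintro ⟨-, -, hprim⟩
        exact absurd ((hchar M hM0).2 dvd_rfl) (hprim M (dvd_zero M) hM0)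
      · rintro ⟨𝔢, 𝔣, h1, h2, h3⟩
        obtain ⟨a, haA, ha0⟩ := Submodule.exists_mem_ne_zero_of_ne_bot hA0
        have h4 : a ∈ (⊥ : Ideal (𝓞 K)) * 𝔢 := (h3 a).1 ((hdenom a).2 haA)
        rw [Ideal.bot_mul] at h4
        exact (ha0 h4).elim
    · -- main case
      have hLHS : ((∃ x : 𝓞 K, psiChar K γ x ≠ 1) ∧
          IsPrimitiveCharMod 𝔟 (psiChar K γ)) ↔ M = 𝔟 := by
        constructor
        · rintro ⟨-, hcharb, hprim⟩
          have hM𝔟 : M ∣ 𝔟 := (hchar 𝔟 h𝔟0).1 hcharb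
          by_contra hne
          exact hprim M hM𝔟 hne ((hchar M hM0).2 dvd_rfl)
        · rintro rfl
          refine ⟨?_, (hchar M h𝔟0).2 dvd_rfl, ?_⟩
          · by_contra hnt
            push_neg at hnt
            have htop : IsCharMod (⊤ : Ideal (𝓞 K)) (psiChar K γ) := by
              intro x z _
              rw [psiChar_add, hnt z, mul_one]
            have hMdvd : M ∣ ⊤ := (hchar ⊤ (by simp)).1 htop
            rw [← Ideal.one_eq_top] at hMdvd
            exact h𝔟 (Ideal.isUnit_iff.1 (isUnit_of_dvd_one hMdvd))
          · intro 𝔟₁ hdvd hne hchar1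
            have h𝔟₁0 : 𝔟₁ ≠ ⊥ := by
              intro h
              rw [h, ← Ideal.zero_eq_bot, zero_dvd_iff, Ideal.zero_eq_bot] at hdvd
              exact h𝔟0 hdvd
            have hM𝔟₁ : M ∣ 𝔟₁ := (hchar 𝔟₁ h𝔟₁0).1 hchar1
            exact hne (le_antisymm (Ideal.dvd_iff_le.1 hM𝔟₁) (Ideal.dvd_iff_le.1 hdvd))
      rw [hLHS, bridge h𝔟0 hCA hNM heq]
      constructor
      · rintro ⟨𝔢, 𝔣, h1, h2, h3⟩
        exact ⟨𝔢, 𝔣, h1, h2, fun α => (hdenom α).trans (by rw [h3])⟩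
      · rintro ⟨𝔢, 𝔣, h1, h2, h3⟩
        refine ⟨𝔢, 𝔣, h1, h2, ?_⟩
        ext α
        rw [← h3 α, hdenom α]
end

section
/- Let $L$ be an algebraically closed field of characteristic $\neq 2$, $m<n$, and let $A,B\in M_{n\times n}(L)$ be symmetric with: $B$ supported in its upper-left $m\times m$ block, that block non-singular, and $\det A\neq 0$. Assume the projective intersection of the quadrics $x^tAx=0$ and $x^tBx=0$ has codimension $2$ and all of its singular points have the form $(0,\mathbf{x}'')$ with $\mathbf{x}''\in L^{n-m}$. Then $\mathrm{rank}(A+\lambda B)\geq n-1$ for every $\lambda\in L$. -/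
open scoped BigOperators

/-- Let `L` be algebraically closed of characteristic `≠ 2`,
`m < n`, and let `A, B` be symmetric `n × n` matrices over `L` with `B`
supported in its upper-left `m × m` block, that block non-singular, and
`det A ≠ 0`.  Assume that the intersection of the two quadrics `xᵀAx = 0`,
`xᵀBx = 0` has codimension `2` (its affine cone has Krull dimension `n - 2`)
and that all of its singular points have the form `(0, x'')`.  Then
`rank(A + λB) ≥ n - 1` for every `λ ∈ L`. -/
theorem rank_pencil_ge_of_singular_locus
    (L : Type*) [Field L] [IsAlgClosed L] (h2 : (2 : L) ≠ 0)
    (n m : ℕ) (hmn : m < n)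
    (A B : Matrix (Fin n) (Fin n) L)
    (hAsymm : A.IsSymm) (hBsymm : B.IsSymm)
    (hBsupp : ∀ i j : Fin n, m ≤ (i : ℕ) ∨ m ≤ (j : ℕ) → B i j = 0)
    (hBblock : ∀ hm : 0 < m,
      (Matrix.of (fun i j : Fin m =>
        B (Fin.castLE hmn.le i) (Fin.castLE hmn.le j))).det ≠ 0)
    (hA : A.det ≠ 0)
    (hcodim : ringKrullDim
      (MvPolynomial (Fin n) L ⧸ Ideal.span
        {(∑ i, ∑ j, MvPolynomial.C (A i j) *
            MvPolynomial.X i * MvPolynomial.X j),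
         (∑ i, ∑ j, MvPolynomial.C (B i j) *
            MvPolynomial.X i * MvPolynomial.X j)}) = (n - 2 : ℕ))
    (hsing : ∀ x : Fin n → L, x ≠ 0 →
      dotProduct x (A.mulVec x) = 0 →
      dotProduct x (B.mulVec x) = 0 →
      (∃ μ ν : L, (μ, ν) ≠ (0, 0) ∧ (μ • A + ν • B).mulVec x = 0) →
      ∀ i : Fin n, (i : ℕ) < m → x i = 0) :
    ∀ lam : L, n - 1 ≤ (A + lam • B).rank := by
  have hAunit : IsUnit A := (Matrix.isUnit_iff_isUnit_det A).mpr (isUnit_iff_ne_zero.mpr hA)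
  intro lam
  by_contra hcon
  push_neg at hcon
  -- case lam = 0
  rcases eq_or_ne lam 0 with rfl | hlam
  · rw [zero_smul, add_zero, Matrix.rank_of_isUnit A hAunit, Fintype.card_fin] at hcon
    omega
  set M : Matrix (Fin n) (Fin n) L := A + lam • B with hM
  -- kernel has dimension ≥ 2
  have hrk : M.rank + Module.finrank L (LinearMap.ker M.mulVecLin) = n := by
    have := LinearMap.finrank_range_add_finrank_ker M.mulVecLin
    rwa [Module.finrank_fin_fun] at this
  have hker2 : 2 ≤ Module.finrank L (LinearMap.ker M.mulVecLin) := by omega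
  obtain ⟨f, hf⟩ := exists_linearIndependent_of_le_finrank hker2
  have hind := hf.map' (LinearMap.ker M.mulVecLin).subtype
    (Submodule.ker_subtype _)
  set u : Fin n → L := (f 0 : Fin n → L) with hu
  set v : Fin n → L := (f 1 : Fin n → L) with hv
  have hpair : ∀ a b : L, a • u + b • v = 0 → a = 0 ∧ b = 0 := by
    intro a b hab
    have := Fintype.linearIndependent_iff.mp hind ![a, b] ?_
    · exact ⟨this 0, this 1⟩
    · rw [Fin.sum_univ_two]; exact hab
  have huker : M.mulVec u = 0 := (f 0).2
  have hvker : M.mulVec v = 0 := (f 1).2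
  -- find nonzero x in ker with xᵀAx = 0
  have key : ∃ x : Fin n → L, x ≠ 0 ∧ M.mulVec x = 0 ∧
      dotProduct x (A.mulVec x) = 0 := by
    rcases eq_or_ne (dotProduct v (A.mulVec v)) 0 with hqv | hqv
    · refine ⟨v, ?_, hvker, hqv⟩
      intro h0
      have := (hpair 0 1 (by rw [h0]; simp)).2
      exact one_ne_zero this
    · obtain ⟨t, ht⟩ : ∃ t : L, dotProduct v (A.mulVec v) * t ^ 2 +
          (dotProduct u (A.mulVec v) + dotProduct v (A.mulVec u)) * t +
          dotProduct u (A.mulVec u) = 0 := by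
        obtain ⟨t, ht⟩ := IsAlgClosed.exists_root
          (Polynomial.C (dotProduct v (A.mulVec v)) * Polynomial.X ^ 2 +
            Polynomial.C (dotProduct u (A.mulVec v) +
              dotProduct v (A.mulVec u)) * Polynomial.X +
            Polynomial.C (dotProduct u (A.mulVec u)))
          (by rw [Polynomial.degree_quadratic hqv]; exact two_ne_zero)
        exact ⟨t, by simpa using ht⟩
      refine ⟨u + t • v, ?_, ?_, ?_⟩
      · intro h0
        have := (hpair 1 t (by rw [← h0]; simp)).1
        exact one_ne_zero this
      · rw [Matrix.mulVec_add, Matrix.mulVec_smul, huker, hvker, smul_zero, add_zero]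
      · simp only [Matrix.mulVec_add, Matrix.mulVec_smul, dotProduct_add,
          add_dotProduct, smul_dotProduct, dotProduct_smul,
          smul_eq_mul]
        linear_combination ht
  obtain ⟨x, hx0, hxker, hqA⟩ := key
  -- xᵀBx = 0
  have hqB : dotProduct x (B.mulVec x) = 0 := by
    have h1 : dotProduct x (M.mulVec x) = 0 := by rw [hxker, dotProduct_zero]
    rw [hM, Matrix.add_mulVec, dotProduct_add, hqA, zero_add,
      Matrix.smul_mulVec, dotProduct_smul, smul_eq_mul] at h1
    exact (mul_eq_zero.mp h1).resolve_left hlam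
  have hzero : ∀ i : Fin n, (i : ℕ) < m → x i = 0 := by
    refine hsing x hx0 hqA hqB ⟨1, lam, ?_, ?_⟩
    · simp
    · rw [one_smul]; exact hxker
  -- Bx = 0
  have hBx : B.mulVec x = 0 := by
    funext i
    show dotProduct (B i) x = 0
    rw [dotProduct]
    refine Finset.sum_eq_zero fun j _ => ?_
    rcases lt_or_ge (j : ℕ) m with hj | hj
    · rw [hzero j hj, mul_zero]
    · rw [hBsupp i j (Or.inr hj), zero_mul]
  -- Ax = 0, hence x = 0, contradiction
  have hAx : A.mulVec x = 0 := by
    have := hxker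
    rwa [hM, Matrix.add_mulVec, Matrix.smul_mulVec, hBx, smul_zero, add_zero] at this
  have : x = 0 := by
    have h1 : A⁻¹.mulVec (A.mulVec x) = x := by
      rw [Matrix.mulVec_mulVec, Matrix.nonsing_inv_mul A (isUnit_iff_ne_zero.mpr hA),
        Matrix.one_mulVec]
    rw [hAx, Matrix.mulVec_zero] at h1
    exact h1.symm
  exact hx0 this
end
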